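/- Let κ > 0 and C ≥ 1 be reals, and let (λ_s)_{s≥1} be a nonincreasing sequence of nonnegative reals with ∑_{s=1}^∞ λ_s² = 1 and such that for every integer D ≥ 1, ∑_{s=D+1}^∞ λ_s² ≤ C²·D^{−2κ}. Then the entanglement entropy is bounded as −∑_{s=1}^∞ λ_s² · log(λ_s²) ≤ c_{κ,1}·log C + c_{κ,2}, where c_{κ,1} = (2 − 2^{−2κ})/(κ(1 − 2^{−2κ})) and c_{κ,2} = (6 + 2κ)·log 2 / (1 − 2^{−2κ})², with the convention 0·log 0 = 0 and log the natural logarithm. -/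

import Mathlib

open Finset

private lemma entropy_term_le (p γ : ℝ) (hp : 0 ≤ p) (hγ : 0 < γ) :
    -(p * Real.log p) ≤ p * Real.log (1 / γ) + γ / Real.exp 1 := by
  rcases eq_or_lt_of_le hp with h | h
  · rw [← h]
    simp only [zero_mul, neg_zero]
    positivity
  · have he : (0:ℝ) < Real.exp 1 := Real.exp_pos 1
    have h1 : Real.log (γ / p) ≤ γ / p / Real.exp 1 := by
      have h2 : Real.log (γ / p / Real.exp 1) ≤ γ / p / Real.exp 1 - 1 :=
        Real.log_le_sub_one_of_pos (by positivity)
      have h3 : Real.log (γ / p / Real.exp 1) = Real.log (γ / p) - 1 := by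
        rw [Real.log_div (by positivity) (ne_of_gt he), Real.log_exp]
      linarith
    have h4 : p * Real.log (γ / p) ≤ γ / Real.exp 1 := by
      calc p * Real.log (γ / p) ≤ p * (γ / p / Real.exp 1) :=
            mul_le_mul_of_nonneg_left h1 hp
        _ = γ / Real.exp 1 := by field_simp
    have h5 : -(p * Real.log p) = p * Real.log (γ / p) + p * Real.log (1 / γ) := by
      rw [Real.log_div (ne_of_gt hγ) (ne_of_gt h), one_div, Real.log_inv]
      ring
    linarith

private lemma sum_blocks (h : ℕ → ℝ) (J : ℕ) :
    ∑ k ∈ range J, ∑ s ∈ Ico (2 ^ k - 1) (2 ^ (k + 1) - 1), h s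
      = ∑ s ∈ range (2 ^ J - 1), h s := by
  induction J with
  | zero => simp
  | succ J ih =>
    rw [Finset.sum_range_succ, ih, Finset.range_eq_Ico, Finset.range_eq_Ico]
    
    refine Finset.sum_Ico_consecutive h (Nat.zero_le _) ?_
    have := Nat.one_le_two_pow (n := J)
    have h2 : 2 ^ J ≤ 2 ^ (J + 1) := Nat.pow_le_pow_right (by norm_num) (by omega)
    omega


set_option maxHeartbeats 1000000 in
private lemma final_arith (κ L E lc x m' : ℝ) (K : ℕ)
    (hκ : 0 < κ) (hL9 : (0.6931471803:ℝ) < L) (he2 : (2.7182818283:ℝ) < E)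
    (hlc : 0 ≤ lc) (hx0 : 0 < x) (hx1 : x < 1)
    (hm' : m' = lc / (κ * L)) (hK2 : (K:ℝ) ≤ m' + 2) :
    L * ((K:ℝ) + x/(1-x)^2) + 2*κ*L*(x/(1-x)^2 + 1) + ((K:ℝ) + 1 + x/(1-x))/E
      ≤ (2-x)/(κ*(1-x)) * lc + (6+2*κ)*L/(1-x)^2 := by
  have hL : (0:ℝ) < L := by linarith
  have he1 : (0:ℝ) < E := by linarith
  have hy0 : (0:ℝ) < 1 - x := by linarith
  have hprod : (1.884:ℝ) < E * L := by nlinarith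
  have t1 : L * (K:ℝ) + ((K:ℝ)+1)/E ≤ (L + 1/E) * m' + ((L + 1/E)*2 + 1/E) := by
    have hid : L * (K:ℝ) + ((K:ℝ)+1)/E = (L + 1/E)*(K:ℝ) + 1/E := by
      field_simp
      ring
    rw [hid]
    have h' : (L + 1/E) * (K:ℝ) ≤ (L + 1/E)*(m'+2) :=
      mul_le_mul_of_nonneg_left hK2 (by positivity)
    nlinarith
  have t2 : (L + 1/E) * m' ≤ 2/κ * lc := by
    rw [hm']
    have h1 : L + 1/E ≤ 2*L := by
      have h2' : 1/E ≤ L := by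
        rw [div_le_iff₀ he1]
        nlinarith
      linarith
    calc (L + 1/E) * (lc/(κ*L)) ≤ 2*L * (lc/(κ*L)) :=
          mul_le_mul_of_nonneg_right h1 (by positivity)
      _ = 2/κ * lc := by
          field_simp
  have t3 : 2/κ * lc ≤ (2-x)/(κ*(1-x)) * lc := by
    refine mul_le_mul_of_nonneg_right ?_ hlc
    rw [div_le_div_iff₀ (by positivity) (by positivity)]
    nlinarith [mul_pos hκ hx0]
  have t4 : 2*κ*L*(x/(1-x)^2+1) ≤ 2*κ*L/(1-x)^2 := by
    have hGx : x/(1-x)^2 + 1 ≤ 1/(1-x)^2 := by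
      have hid : x/(1-x)^2 + 1 = (x + (1-x)^2)/(1-x)^2 := by
        field_simp
      rw [hid]
      gcongr
      nlinarith
    calc 2*κ*L*(x/(1-x)^2+1) ≤ 2*κ*L*(1/(1-x)^2) :=
          mul_le_mul_of_nonneg_left hGx (by positivity)
      _ = 2*κ*L/(1-x)^2 := by ring
  have t5 : (L + 1/E)*2 + 1/E + L*(x/(1-x)^2) + (x/(1-x))/E ≤ 6*L/(1-x)^2 := by
    have hu0 : (0:ℝ) ≤ 1/(1-x)^2 := by positivity
    have hu1 : (1:ℝ) ≤ 1/(1-x)^2 := by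
      rw [le_div_iff₀ (by positivity)]
      nlinarith
    have hG_u : x/(1-x)^2 ≤ 1/(1-x)^2 := by
      rw [div_le_div_iff₀ (by positivity) (by positivity)]
      nlinarith
    have hx_u : x/(1-x) ≤ 1/(1-x)^2 := by
      rw [div_le_div_iff₀ (by positivity) (by positivity)]
      nlinarith
    have h4e : 4/E ≤ 3*L := by
      rw [div_le_iff₀ he1]
      nlinarith
    have hLG : L*(x/(1-x)^2) ≤ L*(1/(1-x)^2) := mul_le_mul_of_nonneg_left hG_u hL.le
    have hxE : (x/(1-x))/E ≤ (1/(1-x)^2)/E := by gcongr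
    have hcu : (2*L + 3/E) ≤ (2*L+3/E)*(1/(1-x)^2) := by
      nlinarith [mul_nonneg (show (0:ℝ) ≤ 2*L+3/E by positivity)
        (show (0:ℝ) ≤ 1/(1-x)^2 - 1 by linarith)]
    have hfin : (2*L+3/E)*(1/(1-x)^2) + L*(1/(1-x)^2) + (1/(1-x)^2)/E ≤ 6*L/(1-x)^2 := by
      have hsum : (2*L+3/E) + L + 1/E ≤ 6*L := by
        have h44 : 3/E + 1/E = 4/E := by ring
        linarith
      calc (2*L+3/E)*(1/(1-x)^2) + L*(1/(1-x)^2) + (1/(1-x)^2)/E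
          = ((2*L+3/E) + L + 1/E)*(1/(1-x)^2) := by ring
        _ ≤ 6*L*(1/(1-x)^2) := mul_le_mul_of_nonneg_right hsum hu0
        _ = 6*L/(1-x)^2 := by ring
    have s1 : (L + 1/E)*2 + 1/E = 2*L + 3/E := by ring
    linarith
  have hsplit1 : ((K:ℝ) + 1 + x/(1-x))/E = ((K:ℝ)+1)/E + (x/(1-x))/E := by ring
  have hsplit2 : (6+2*κ)*L/(1-x)^2 = 6*L/(1-x)^2 + 2*κ*L/(1-x)^2 := by ring
  have hsplit3 : L * ((K:ℝ) + x/(1-x)^2) = L*(K:ℝ) + L*(x/(1-x)^2) := by ring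
  linarith

set_option maxHeartbeats 1000000 in
/-- **Approximation implies entropy bound (Lemma in the proof of Theorem 3).** If a
normalized nonincreasing Schmidt spectrum `(λ_s)_{s≥1}` (here `f s = λ_{s+1}`, 0-indexed)
satisfies the tail bounds `∑_{s>D} λ_s² ≤ C²·D^{−2κ}` for all `D ≥ 1`, then the
entanglement entropy obeys `−∑ λ_s² log λ_s² ≤ c_{κ,1} log C + c_{κ,2}` with
`c_{κ,1} = (2−2^{−2κ})/(κ(1−2^{−2κ}))` and `c_{κ,2} = (6+2κ)log 2/(1−2^{−2κ})²`.
(`Real.log 0 = 0`, so the convention `0·log 0 = 0` is automatic.) -/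
theorem stmt_12 (κ C : ℝ) (hκ : 0 < κ) (hC : 1 ≤ C) (f : ℕ → ℝ)
    (hf_anti : Antitone f) (hf_nonneg : ∀ s, 0 ≤ f s)
    (hf_sum : Summable fun s : ℕ => f s ^ 2)
    (hnorm : ∑' s : ℕ, f s ^ 2 = 1)
    (htail : ∀ D : ℕ, 1 ≤ D → ∑' s : ℕ, f (s + D) ^ 2 ≤ C ^ 2 * (D : ℝ) ^ (-(2 * κ))) :
    -∑' s : ℕ, f s ^ 2 * Real.log (f s ^ 2)
      ≤ (2 - (2 : ℝ) ^ (-(2 * κ))) / (κ * (1 - (2 : ℝ) ^ (-(2 * κ)))) * Real.log C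
        + (6 + 2 * κ) * Real.log 2 / (1 - (2 : ℝ) ^ (-(2 * κ))) ^ 2 := by
  have h2 : (1:ℝ) < 2 := one_lt_two
  have hL : 0 < Real.log 2 := Real.log_pos h2
  have hC0 : (0:ℝ) < C := lt_of_lt_of_le one_pos hC
  have hlC : 0 ≤ Real.log C := Real.log_nonneg hC
  set x : ℝ := (2:ℝ) ^ (-(2*κ)) with hx_def
  have hx0 : 0 < x := Real.rpow_pos_of_pos two_pos _
  have hx1 : x < 1 := Real.rpow_lt_one_of_one_lt_of_neg h2 (by nlinarith)
  have hy0 : 0 < 1 - x := by linarith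
  have hRHS0 : 0 ≤ (2 - x) / (κ * (1 - x)) * Real.log C
      + (6 + 2*κ) * Real.log 2 / (1 - x) ^ 2 := by
    have h1 : 0 ≤ (2 - x) / (κ * (1 - x)) := div_nonneg (by linarith) (by positivity)
    have h2' : 0 ≤ (6 + 2*κ) * Real.log 2 / (1 - x) ^ 2 := by positivity
    nlinarith [mul_nonneg h1 hlC]
  rw [← tsum_neg]
  set p : ℕ → ℝ := fun s => f s ^ 2 with hp_def
  have hp0 : ∀ s, 0 ≤ p s := fun s => sq_nonneg _
  have hp1 : ∀ s, p s ≤ 1 := by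
    intro s
    have := hf_sum.le_tsum s (fun j _ => sq_nonneg (f j))
    simpa [hnorm] using this
  have hterm0 : ∀ s, 0 ≤ -(p s * Real.log (p s)) := by
    intro s
    have hls : Real.log (p s) ≤ 0 := Real.log_nonpos (hp0 s) (hp1 s)
    nlinarith [hp0 s]
  by_cases hsm : Summable (fun s => -(p s * Real.log (p s)))
  case neg =>
    rw [tsum_eq_zero_of_not_summable hsm]
    exact hRHS0
  case pos =>
  set m' : ℝ := Real.log C / (κ * Real.log 2) with hm'_def
  have hm'0 : 0 ≤ m' := div_nonneg hlC (by positivity)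
  set K : ℕ := ⌈m'⌉₊ + 1 with hK_def
  have hK1 : m' ≤ (K:ℝ) - 1 := by
    have := Nat.le_ceil m'
    push_cast [hK_def]
    linarith
  have hK2 : (K:ℝ) ≤ m' + 2 := by
    have := Nat.ceil_lt_add_one hm'0
    push_cast [hK_def]
    linarith
  set a : ℕ → ℝ := fun k => 2*Real.log C - 2*κ*Real.log 2*((k:ℝ)-1) with ha_def
  set t : ℕ → ℝ := fun k => min 1 (Real.exp (a k)) with ht_def
  set q : ℕ → ℝ := fun k => ∑ s ∈ Ico (2^k - 1) (2^(k+1) - 1), p s with hq_def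
  have hq0 : ∀ k, 0 ≤ q k := fun k => Finset.sum_nonneg fun s _ => hp0 s
  have ht_pos : ∀ k, 0 < t k := fun k => lt_min one_pos (Real.exp_pos _)
  have ht_le1 : ∀ k, t k ≤ 1 := fun k => min_le_left _ _
  have hq_le1 : ∀ k, q k ≤ 1 := by
    intro k
    have h1 : q k ≤ ∑' s, p s := hf_sum.sum_le_tsum _ (fun s _ => hp0 s)
    simpa [hnorm] using h1
  have hq_exp : ∀ k, 1 ≤ k → q k ≤ Real.exp (a k) := by
    intro k hk
    set D : ℕ := 2^k - 1 with hD_def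
    have h2k : 2 ≤ 2^k := by
      calc 2 = 2^1 := (pow_one 2).symm
      _ ≤ 2^k := Nat.pow_le_pow_right (by norm_num) hk
    have hD1 : 1 ≤ D := by omega
    have e1 : q k = ∑ i ∈ range (2^k), p (i + D) := by
      simp only [hq_def]
      rw [Finset.sum_Ico_eq_sum_range]
      have hc : 2^(k+1) - 1 - (2^k - 1) = 2^k := by
        have h' : 2^(k+1) = 2*2^k := by ring
        omega
      rw [hc]
      exact Finset.sum_congr rfl fun i _ => by rw [add_comm]
    have e2 : q k ≤ ∑' i, p (i + D) := by
      rw [e1]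
      exact ((summable_nat_add_iff D).2 hf_sum).sum_le_tsum _ (fun i _ => hp0 _)
    have e3 : ∑' i, p (i + D) ≤ C^2 * (D:ℝ)^(-(2*κ)) := htail D hD1
    have e4 : C^2 * (D:ℝ)^(-(2*κ)) ≤ C^2 * (((2:ℝ)^(k-1:ℕ)))^(-(2*κ)) := by
      have hlt : 2^(k-1) < 2^k := Nat.pow_lt_pow_right one_lt_two (by omega)
      have hle : ((2:ℝ)^(k-1:ℕ)) ≤ (D:ℝ) := by
        have hn : (2:ℕ)^(k-1) ≤ D := by omega
        exact_mod_cast hn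
      refine mul_le_mul_of_nonneg_left ?_ (by positivity)
      exact Real.rpow_le_rpow_of_nonpos (by positivity) hle (by nlinarith)
    have e5 : C^2 * (((2:ℝ)^(k-1:ℕ)))^(-(2*κ)) = Real.exp (a k) := by
      have hC2 : C^2 = Real.exp (2*Real.log C) := by
        rw [two_mul, Real.exp_add, Real.exp_log hC0]
        ring
      have hpow : (((2:ℝ)^(k-1:ℕ)))^(-(2*κ))
          = Real.exp (Real.log 2 * (((k-1:ℕ):ℝ) * -(2*κ))) := by
        rw [← Real.rpow_natCast 2 (k-1), ← Real.rpow_mul (by norm_num : (0:ℝ) ≤ 2),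
          Real.rpow_def_of_pos two_pos]
      rw [hC2, hpow, ← Real.exp_add]
      congr 1
      have hcast : ((k-1:ℕ):ℝ) = (k:ℝ) - 1 := by
        push_cast [Nat.cast_sub hk]
        ring
      rw [hcast]
      simp only [ha_def]
      ring
    linarith
  have hq_le_t : ∀ k, q k ≤ t k := by
    intro k
    refine le_min (hq_le1 k) ?_
    rcases Nat.eq_zero_or_pos k with hk | hk
    · subst hk
      refine le_trans (hq_le1 0) (Real.one_le_exp ?_)
      have h0 : 0 ≤ a 0 := by
        simp only [ha_def, Nat.cast_zero]
        nlinarith [mul_pos hκ hL]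
      exact h0
    · exact hq_exp k hk
  have hlog_t : ∀ k, Real.log (t k) = min 0 (a k) := by
    intro k
    rcases le_total (Real.exp (a k)) 1 with h | h
    · rw [ht_def]
      simp only []
      rw [min_eq_right h, Real.log_exp, min_eq_right]
      exact (Real.exp_le_one_iff.mp h)
    · rw [ht_def]
      simp only []
      rw [min_eq_left h, Real.log_one, min_eq_left]
      exact Real.one_le_exp_iff.mp h
  have hm'eq : Real.log C = m' * (κ * Real.log 2) := by
    rw [hm'_def]
    field_simp
  have hneglog : ∀ k, -Real.log (t k) ≤ 2*κ*Real.log 2 * (max 0 ((k:ℝ) - K) + 1) := by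
    intro k
    rw [hlog_t k]
    have hmax0 : (0:ℝ) ≤ max 0 ((k:ℝ) - K) := le_max_left _ _
    have hR0 : 0 ≤ 2*κ*Real.log 2 * (max 0 ((k:ℝ) - K) + 1) := by positivity
    rcases le_total 0 (a k) with h | h
    · rw [min_eq_left h]
      simpa using hR0
    · rw [min_eq_right h]
      have h1 : -(a k) = 2*κ*Real.log 2 * (((k:ℝ)-1) - m') := by
        simp only [ha_def]
        rw [hm'eq]
        ring
      have h2 : ((k:ℝ)-1) - m' ≤ max 0 ((k:ℝ) - K) + 1 := by
        have h3 : (k:ℝ) - K ≤ max 0 ((k:ℝ) - K) := le_max_right _ _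
        linarith [hK2]
      rw [h1]
      exact mul_le_mul_of_nonneg_left h2 (by positivity)
  have hxe : x = Real.exp (-(2*κ*Real.log 2)) := by
    rw [hx_def, Real.rpow_def_of_pos two_pos]
    ring_nf
  have ht_pow : ∀ k, K ≤ k → t k ≤ x ^ (k - K) := by
    intro k hk
    have h1 : t k ≤ Real.exp (a k) := min_le_right _ _
    have h2 : Real.exp (a k) ≤ x ^ (k - K) := by
      rw [hxe, ← Real.exp_nat_mul]
      apply Real.exp_le_exp.mpr
      have hcast : ((k - K : ℕ):ℝ) = (k:ℝ) - K := by
        push_cast [Nat.cast_sub hk]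
        ring
      rw [hcast]
      simp only [ha_def]
      rw [hm'eq]
      nlinarith [mul_nonneg (sub_nonneg.2 hK1) (mul_pos hκ hL).le]
    linarith
  have hgx : ‖x‖ < 1 := by
    rw [Real.norm_eq_abs, abs_of_pos hx0]
    exact hx1
  have hgsum : HasSum (fun i : ℕ => (i:ℝ) * x ^ i) (x / (1-x)^2) :=
    hasSum_coe_mul_geometric_of_norm_lt_one hgx
  refine Real.tsum_le_of_sum_range_le hterm0 ?_
  intro n
  have hsub : ∑ s ∈ range n, -(p s * Real.log (p s))
      ≤ ∑ k ∈ range n, ∑ s ∈ Ico (2^k - 1) (2^(k+1) - 1), -(p s * Real.log (p s)) := by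
    rw [sum_blocks (fun s => -(p s * Real.log (p s))) n]
    apply Finset.sum_le_sum_of_subset_of_nonneg
    · apply Finset.range_subset_range.2
      have := Nat.lt_two_pow_self (n := n)
      omega
    · intro s _ _
      exact hterm0 s
  have hblock : ∀ k, ∑ s ∈ Ico (2^k - 1) (2^(k+1) - 1), -(p s * Real.log (p s))
      ≤ q k * ((k:ℝ) * Real.log 2 - Real.log (t k)) + t k / Real.exp 1 := by
    intro k
    have h2k0 : (0:ℝ) < 2^k := by positivity
    have hγ : 0 < t k / 2^k := div_pos (ht_pos k) h2k0
    have hcard : (Ico (2^k - 1) (2^(k+1) - 1)).card = 2^k := by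
      rw [Nat.card_Ico]
      have h' : 2^(k+1) = 2*2^k := by ring
      have h'' : 1 ≤ 2^k := Nat.one_le_two_pow
      omega
    have hlog : Real.log (1 / (t k / 2^k)) = (k:ℝ) * Real.log 2 - Real.log (t k) := by
      rw [one_div, Real.log_inv, Real.log_div (ne_of_gt (ht_pos k)) (ne_of_gt h2k0),
        Real.log_pow]
      push_cast
      ring
    calc ∑ s ∈ Ico (2^k - 1) (2^(k+1) - 1), -(p s * Real.log (p s))
        ≤ ∑ s ∈ Ico (2^k - 1) (2^(k+1) - 1),
            (p s * Real.log (1 / (t k / 2^k)) + (t k / 2^k) / Real.exp 1) :=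
          Finset.sum_le_sum fun s _ => entropy_term_le (p s) _ (hp0 s) hγ
      _ = q k * Real.log (1 / (t k / 2^k)) + (2^k : ℝ) * ((t k / 2^k) / Real.exp 1) := by
          rw [Finset.sum_add_distrib, ← Finset.sum_mul, Finset.sum_const, hcard,
            nsmul_eq_mul]
          push_cast
          rfl
      _ = q k * ((k:ℝ) * Real.log 2 - Real.log (t k)) + t k / Real.exp 1 := by
          rw [hlog]
          congr 1
          field_simp
  have hB : ∑ k ∈ range n, q k ≤ 1 := by
    have h1 : ∑ k ∈ range n, q k = ∑ s ∈ range (2^n - 1), p s := by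
      simp only [hq_def]
      exact sum_blocks p n
    rw [h1, ← hnorm]
    exact hf_sum.sum_le_tsum _ (fun s _ => hp0 s)
  have hA : ∑ k ∈ range n, q k * max 0 ((k:ℝ) - K) ≤ x / (1-x)^2 := by
    have point : ∀ k, q k * max 0 ((k:ℝ) - K) ≤ ((k - K : ℕ):ℝ) * x ^ (k - K) := by
      intro k
      rcases le_or_gt k K with h | h
      · have h1 : max 0 ((k:ℝ) - K) = 0 := by
          rw [max_eq_left]
          have : (k:ℝ) ≤ K := by exact_mod_cast h
          linarith
        rw [h1, mul_zero]
        positivity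
      · have hKk : (K:ℝ) ≤ (k:ℝ) := by exact_mod_cast h.le
        have h1 : max 0 ((k:ℝ) - K) = ((k - K : ℕ):ℝ) := by
          rw [max_eq_right (by linarith : (0:ℝ) ≤ (k:ℝ) - K)]
          push_cast [Nat.cast_sub h.le]
          ring
        rw [h1]
        have hq2 : q k ≤ x ^ (k - K) := (hq_le_t k).trans (ht_pow k h.le)
        calc q k * ((k - K : ℕ):ℝ) ≤ x ^ (k - K) * ((k - K : ℕ):ℝ) :=
              mul_le_mul_of_nonneg_right hq2 (by positivity)
          _ = ((k - K : ℕ):ℝ) * x ^ (k - K) := by ring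
    calc ∑ k ∈ range n, q k * max 0 ((k:ℝ) - K)
        ≤ ∑ k ∈ range n, ((k - K : ℕ):ℝ) * x ^ (k - K) :=
          Finset.sum_le_sum fun k _ => point k
      _ ≤ x / (1-x)^2 := by
          rcases le_or_gt n K with h | h
          · have hz : ∑ k ∈ range n, ((k - K : ℕ):ℝ) * x ^ (k - K) = 0 := by
              apply Finset.sum_eq_zero
              intro k hk
              have hk' : k < n := Finset.mem_range.mp hk
              have : k - K = 0 := by omega
              rw [this]
              simp
            rw [hz]
            positivity
          · rw [range_eq_Ico, ← Finset.sum_Ico_consecutive _ (Nat.zero_le K) h.le]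
            have hz : ∑ k ∈ Ico 0 K, ((k - K : ℕ):ℝ) * x ^ (k - K) = 0 := by
              apply Finset.sum_eq_zero
              intro k hk
              have hk' : k < K := (Finset.mem_Ico.mp hk).2
              have : k - K = 0 := by omega
              rw [this]
              simp
            rw [hz, zero_add, Finset.sum_Ico_eq_sum_range]
            have he : ∀ i, ((K + i - K : ℕ):ℝ) * x ^ (K + i - K) = (i:ℝ) * x ^ i := by
              intro i
              congr 1 <;> rw [Nat.add_sub_cancel_left] <;> rfl
            rw [Finset.sum_congr rfl fun i _ => he i]
            rw [← hgsum.tsum_eq]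
            exact hgsum.summable.sum_le_tsum _ (fun i _ => by positivity)
  have hT : ∑ k ∈ range n, t k ≤ (K:ℝ) + 1 + x / (1-x) := by
    have hxg : 0 ≤ x / (1-x) := by positivity
    rcases le_or_gt n (K+1) with h | h
    · calc ∑ k ∈ range n, t k ≤ ∑ k ∈ range n, 1 := Finset.sum_le_sum fun k _ => ht_le1 k
        _ = (n:ℝ) := by simp
        _ ≤ (K:ℝ) + 1 + x / (1-x) := by
            have : (n:ℝ) ≤ (K:ℝ) + 1 := by exact_mod_cast h
            linarith
    · rw [range_eq_Ico, ← Finset.sum_Ico_consecutive _ (Nat.zero_le (K+1)) h.le]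
      have h1 : ∑ k ∈ Ico 0 (K+1), t k ≤ (K:ℝ) + 1 := by
        calc ∑ k ∈ Ico 0 (K+1), t k ≤ ∑ k ∈ Ico 0 (K+1), 1 :=
              Finset.sum_le_sum fun k _ => ht_le1 k
          _ = (K:ℝ) + 1 := by simp
      have h2 : ∑ k ∈ Ico (K+1) n, t k ≤ x / (1-x) := by
        have hgeo : HasSum (fun i : ℕ => x ^ (i+1)) (x / (1-x)) := by
          have := (hasSum_geometric_of_lt_one hx0.le hx1).mul_left x
          have heq : (fun i : ℕ => x * x ^ i) = fun i : ℕ => x ^ (i+1) := by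
            funext i
            rw [pow_succ]
            ring
          rw [heq] at this
          simpa [div_eq_mul_inv] using this
        calc ∑ k ∈ Ico (K+1) n, t k ≤ ∑ k ∈ Ico (K+1) n, x ^ (k - K) := by
              apply Finset.sum_le_sum
              intro k hk
              have hk' : K + 1 ≤ k := (Finset.mem_Ico.mp hk).1
              exact ht_pow k (by omega)
          _ ≤ x / (1-x) := by
              rw [Finset.sum_Ico_eq_sum_range]
              have he : ∀ i, x ^ (K + 1 + i - K) = x ^ (i+1) := by
                intro i
                congr 1
                omega
              rw [Finset.sum_congr rfl fun i _ => he i, ← hgeo.tsum_eq]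
              exact hgeo.summable.sum_le_tsum _ (fun i _ => by positivity)
      linarith
  set G : ℝ := x / (1-x)^2 with hG_def
  have hG0 : 0 ≤ G := by positivity
  have key : ∑ k ∈ range n, (q k * ((k:ℝ) * Real.log 2 - Real.log (t k)) + t k / Real.exp 1)
      ≤ Real.log 2 * ((K:ℝ) + G) + 2*κ*Real.log 2 * (G + 1)
        + ((K:ℝ) + 1 + x/(1-x)) / Real.exp 1 := by
    have point : ∀ k ∈ range n,
        q k * ((k:ℝ) * Real.log 2 - Real.log (t k)) + t k / Real.exp 1
          ≤ Real.log 2 * (q k * (K:ℝ) + q k * max 0 ((k:ℝ)-K))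
            + 2*κ*Real.log 2 * (q k * max 0 ((k:ℝ)-K) + q k) + t k / Real.exp 1 := by
      intro k _
      have hmax : (k:ℝ) ≤ (K:ℝ) + max 0 ((k:ℝ)-K) := by
        have := le_max_right (0:ℝ) ((k:ℝ)-K)
        linarith
      have e1 : q k * (k:ℝ) ≤ q k * ((K:ℝ) + max 0 ((k:ℝ)-K)) :=
        mul_le_mul_of_nonneg_left hmax (hq0 k)
      have e2 : q k * (-Real.log (t k)) ≤ q k * (2*κ*Real.log 2 * (max 0 ((k:ℝ)-K) + 1)) :=
        mul_le_mul_of_nonneg_left (hneglog k) (hq0 k)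
      nlinarith [mul_le_mul_of_nonneg_right e1 hL.le]
    calc ∑ k ∈ range n, (q k * ((k:ℝ) * Real.log 2 - Real.log (t k)) + t k / Real.exp 1)
        ≤ ∑ k ∈ range n, (Real.log 2 * (q k * (K:ℝ) + q k * max 0 ((k:ℝ)-K))
            + 2*κ*Real.log 2 * (q k * max 0 ((k:ℝ)-K) + q k) + t k / Real.exp 1) :=
          Finset.sum_le_sum point
      _ = Real.log 2 * ((∑ k ∈ range n, q k) * (K:ℝ)
              + ∑ k ∈ range n, q k * max 0 ((k:ℝ)-K))
            + 2*κ*Real.log 2 * ((∑ k ∈ range n, q k * max 0 ((k:ℝ)-K))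
              + ∑ k ∈ range n, q k)
            + (∑ k ∈ range n, t k) / Real.exp 1 := by
          rw [Finset.sum_add_distrib, Finset.sum_add_distrib, ← Finset.mul_sum, ← Finset.mul_sum,
            Finset.sum_add_distrib, Finset.sum_add_distrib, ← Finset.sum_mul, Finset.sum_div]
      _ ≤ _ := by
          have he1 : (0:ℝ) < Real.exp 1 := Real.exp_pos 1
          have b1 : (∑ k ∈ range n, q k) * (K:ℝ) ≤ (K:ℝ) := by
            have := mul_le_mul_of_nonneg_right hB (Nat.cast_nonneg K : (0:ℝ) ≤ (K:ℝ))
            simpa using this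
          have b2 : Real.log 2 * ((∑ k ∈ range n, q k) * (K:ℝ)
                + ∑ k ∈ range n, q k * max 0 ((k:ℝ)-K))
              ≤ Real.log 2 * ((K:ℝ) + G) :=
            mul_le_mul_of_nonneg_left (add_le_add b1 hA) hL.le
          have b3 : 2*κ*Real.log 2 * ((∑ k ∈ range n, q k * max 0 ((k:ℝ)-K))
                + ∑ k ∈ range n, q k)
              ≤ 2*κ*Real.log 2 * (G + 1) :=
            mul_le_mul_of_nonneg_left (add_le_add hA hB) (by positivity)
          have b4 : (∑ k ∈ range n, t k) / Real.exp 1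
              ≤ ((K:ℝ) + 1 + x/(1-x)) / Real.exp 1 := by gcongr
          linarith
  have chain : ∑ s ∈ range n, -(p s * Real.log (p s))
      ≤ Real.log 2 * ((K:ℝ) + G) + 2*κ*Real.log 2 * (G + 1)
        + ((K:ℝ) + 1 + x/(1-x)) / Real.exp 1 :=
    hsub.trans ((Finset.sum_le_sum fun k _ => hblock k).trans key)
  refine chain.trans ?_
  rw [hG_def]
  exact final_arith κ (Real.log 2) (Real.exp 1) (Real.log C) x m' K hκ
    Real.log_two_gt_d9 Real.exp_one_gt_d9 hlC hx0 hx1 hm'_def hK2
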